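/- Let 1 ≤ m ≤ 4 and m ≤ n. Let f(s) = Σ_{i=0}^n a_i s^i have positive coefficients with a_{i−2} a_{i+1} < a_i a_{i−1} for i = 2, ..., n−1 (if n ≥ 3), and let g(s) = Σ_{i=0}^m b_i s^i be Hurwitz stable with positive coefficients. Then for every j ∈ {0, ..., n−m} the polynomial F_j(s) = Σ_{i=0}^m a_{j+i} b_i s^i is Hurwitz stable. -/

import Mathlib

lemma quad_pos (α β γ : ℝ) (hα : 0 < α)
    (H : ∀ z : ℂ, (α:ℂ)*z^2 + (β:ℂ)*z + (γ:ℂ) = 0 → z.re < 0) : 0 < β ∧ 0 < γ := by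
  have hroot : ∀ r : ℝ, α*r^2 + β*r + γ = 0 → r < 0 := by
    intro r hr
    have := H r (by exact_mod_cast congrArg (fun x : ℝ => (x:ℂ)) hr)
    simpa using this
  constructor
  · by_contra hβ
    push_neg at hβ
    set d := β^2 - 4*α*γ with hd
    rcases le_or_gt 0 d with hpos | hneg
    · set r := (-β + Real.sqrt d)/(2*α) with hrdef
      have hsq : Real.sqrt d ^ 2 = d := Real.sq_sqrt hpos
      have hr : α*r^2 + β*r + γ = 0 := by
        rw [hrdef]; field_simp
        nlinarith [hsq]
      have h1 : 0 ≤ Real.sqrt d := Real.sqrt_nonneg d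
      have h2 : 0 ≤ r := div_nonneg (by linarith) (by linarith)
      linarith [hroot r hr]
    · set y := Real.sqrt (-d) / (2*α) with hy
      have hsq : Real.sqrt (-d) ^ 2 = -d := Real.sq_sqrt (by linarith)
      set z : ℂ := ⟨-β/(2*α), y⟩ with hz
      have hre : z.re = -β/(2*α) := rfl
      have him : z.im = y := rfl
      have hzr : (α:ℂ)*z^2 + (β:ℂ)*z + (γ:ℂ) = 0 := by
        apply Complex.ext <;>
          simp [Complex.add_re, Complex.add_im, Complex.mul_re, Complex.mul_im, pow_two,
            hre, him] <;>
          rw [hy] <;> field_simp <;> nlinarith [hsq]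
      have h3 := H z hzr
      rw [hre] at h3
      have h4 : 0 ≤ -β/(2*α) := div_nonneg (by linarith) (by linarith)
      linarith
  · by_contra hγ
    push_neg at hγ
    set d := β^2 - 4*α*γ with hd
    have hpos : 0 ≤ d := by nlinarith
    set r := (-β + Real.sqrt d)/(2*α) with hrdef
    have hsq : Real.sqrt d ^ 2 = d := Real.sq_sqrt hpos
    have hr : α*r^2 + β*r + γ = 0 := by
      rw [hrdef]; field_simp
      nlinarith [hsq]
    have h1 : β ≤ Real.sqrt d := by
      rcases le_or_gt β 0 with h | h
      · linarith [Real.sqrt_nonneg d]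
      · calc β = Real.sqrt (β^2) := (Real.sqrt_sq h.le).symm
          _ ≤ Real.sqrt d := Real.sqrt_le_sqrt (by nlinarith)
    have h2 : 0 ≤ r := div_nonneg (by linarith) (by linarith)
    linarith [hroot r hr]


lemma cubic_real_root (c3 c2 c1 c0 : ℝ) (h3 : 0 < c3) (h0 : 0 < c0) :
    ∃ r : ℝ, r < 0 ∧ c3*r^3 + c2*r^2 + c1*r + c0 = 0 := by
  obtain ⟨M, hM1, hMc⟩ : ∃ M : ℝ, 1 ≤ M ∧ |c2| + |c1| + c0 ≤ c3*M - c3 := by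
    refine ⟨(|c2| + |c1| + c0)/c3 + 1, ?_, ?_⟩
    · have h : 0 ≤ (|c2| + |c1| + c0)/c3 := by positivity
      linarith
    · rw [mul_add, mul_div_cancel₀ _ (ne_of_gt h3)]
      linarith
  have hfM : c3*(-M)^3 + c2*(-M)^2 + c1*(-M) + c0 ≤ 0 := by
    have e2 : c2*(-M)^2 ≤ |c2| * M^2 := by
      rw [show (-M)^2 = M^2 by ring]
      exact mul_le_mul_of_nonneg_right (le_abs_self c2) (by positivity)
    have e1 : c1*(-M) ≤ |c1| * M := by
      nlinarith [neg_abs_le c1]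
    have hM2 : (1:ℝ) ≤ M^2 := by nlinarith [sq_nonneg (M-1)]
    have hMM : M ≤ M^2 := by nlinarith [sq_nonneg (M-1)]
    have e0 : c0 ≤ c0 * M^2 := by nlinarith
    have e3 : (|c2| + |c1| + c0) * M^2 ≤ (c3*M - c3) * M^2 := by
      apply mul_le_mul_of_nonneg_right hMc (by positivity)
    have e1' : |c1| * M ≤ |c1| * M^2 := mul_le_mul_of_nonneg_left hMM (abs_nonneg c1)
    nlinarith
  have hcont : ContinuousOn (fun x : ℝ => c3*x^3 + c2*x^2 + c1*x + c0)
      (Set.Icc (-M) 0) := by fun_prop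
  have hzero : (0:ℝ) ∈ Set.Icc (c3*(-M)^3 + c2*(-M)^2 + c1*(-M) + c0)
      (c3*0^3 + c2*0^2 + c1*0 + c0) := by
    constructor
    · exact hfM
    · simp; linarith
  obtain ⟨r, hr1, hr2⟩ := intermediate_value_Icc (by linarith : -M ≤ 0) hcont hzero
  refine ⟨r, ?_, hr2.symm ▸ hr2⟩
  · rcases lt_or_eq_of_le hr1.2 with h | h
    · exact h
    · exfalso; rw [h] at hr2; simp at hr2; linarith


lemma stable1 (c0 c1 : ℝ) (h0 : 0 < c0) (h1 : 0 < c1) (z : ℂ)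
    (hz : (c0:ℂ) + (c1:ℂ)*z = 0) : z.re < 0 := by
  obtain ⟨x, y⟩ := z
  have hre := congrArg Complex.re hz
  have him := congrArg Complex.im hz
  simp [Complex.add_re, Complex.add_im, Complex.mul_re, Complex.mul_im] at hre him
  show x < 0
  nlinarith

lemma stable2 (c0 c1 c2 : ℝ) (h0 : 0 < c0) (h1 : 0 < c1) (h2 : 0 < c2) (z : ℂ)
    (hz : (c0:ℂ) + (c1:ℂ)*z + (c2:ℂ)*z^2 = 0) : z.re < 0 := by
  obtain ⟨x, y⟩ := z
  have hre := congrArg Complex.re hz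
  have him := congrArg Complex.im hz
  simp [Complex.add_re, Complex.add_im, Complex.mul_re, Complex.mul_im, pow_two] at hre him
  show x < 0
  by_contra hx
  push_neg at hx
  rcases eq_or_ne y 0 with hy | hy
  · subst hy; simp at hre him; nlinarith
  · have h' : 2*c2*x + c1 = 0 := by
      rcases mul_eq_zero.mp (show y * (2*c2*x + c1) = 0 by linarith [him]) with h | h
      · exact absurd h hy
      · exact h
    nlinarith

lemma stable3 (c0 c1 c2 c3 : ℝ) (h0 : 0 < c0) (h1 : 0 < c1) (h2 : 0 < c2) (h3 : 0 < c3)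
    (hD : c0*c3 < c1*c2) (z : ℂ)
    (hz : (c0:ℂ) + (c1:ℂ)*z + (c2:ℂ)*z^2 + (c3:ℂ)*z^3 = 0) : z.re < 0 := by
  obtain ⟨x, y⟩ := z
  have hre := congrArg Complex.re hz
  have him := congrArg Complex.im hz
  simp [Complex.add_re, Complex.add_im, Complex.mul_re, Complex.mul_im, pow_succ, pow_zero,
    one_mul] at hre him
  show x < 0
  by_contra hx
  push_neg at hx
  rcases eq_or_ne y 0 with hy | hy
  · subst hy; simp at hre him
    nlinarith [mul_nonneg (mul_nonneg hx hx) hx, mul_nonneg hx hx]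
  · have h' : 3*c3*x^2 + 2*c2*x + c1 - c3*y^2 = 0 := by
      rcases mul_eq_zero.mp (show y * (3*c3*x^2 + 2*c2*x + c1 - c3*y^2) = 0 by
        nlinarith [him]) with h | h
      · exact absurd h hy
      · exact h
    -- c3*hre combined with h' : derive -8c3²x³ -8c2c3x² -2(c1c3+c2²)x + (c0c3-c1c2) = 0
    have key : c0*c3 - c1*c2 - 8*c3^2*x^3 - 8*c2*c3*x^2 - 2*(c1*c3 + c2^2)*x = 0 := by
      linear_combination c3*hre - (c2 + 3*c3*x)*h'
    nlinarith [key, mul_nonneg (pow_nonneg hx 3) (sq_nonneg c3),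
      mul_nonneg (pow_nonneg hx 2) (mul_pos h2 h3).le,
      mul_nonneg hx (mul_pos h1 h3).le, mul_nonneg hx (mul_pos h2 h2).le]


lemma stable4 (c0 c1 c2 c3 c4 : ℝ) (h0 : 0 < c0) (h1 : 0 < c1) (h2 : 0 < c2) (h3 : 0 < c3)
    (h4 : 0 < c4) (hD : c0*c3^2 + c1^2*c4 < c1*c2*c3) (z : ℂ)
    (hz : (c0:ℂ) + (c1:ℂ)*z + (c2:ℂ)*z^2 + (c3:ℂ)*z^3 + (c4:ℂ)*z^4 = 0) : z.re < 0 := by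
  have hA : 0 < c0*c3^2 + c1^2*c4 := by positivity
  have hsq : (c0*c3^2+c1^2*c4)*(c0*c3^2+c1^2*c4) < (c1*c2*c3)*(c1*c2*c3) :=
    mul_self_lt_mul_self hA.le hD
  have hL : 0 ≤ c2^2 - 4*c0*c4 := by
    nlinarith [sq_nonneg (c0*c3^2 - c1^2*c4), mul_pos (mul_pos (mul_pos h1 h1) h3) h3]
  obtain ⟨x, y⟩ := z
  have hre := congrArg Complex.re hz
  have him := congrArg Complex.im hz
  simp [Complex.add_re, Complex.add_im, Complex.mul_re, Complex.mul_im, pow_succ, pow_zero,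
    one_mul] at hre him
  show x < 0
  by_contra hx
  push_neg at hx
  rcases eq_or_ne y 0 with hy | hy
  · subst hy; simp at hre him
    nlinarith [mul_nonneg (mul_nonneg (mul_nonneg hx hx) hx) hx,
      mul_nonneg (mul_nonneg hx hx) hx, mul_nonneg hx hx]
  · have h' : c1 + 2*c2*x + 3*c3*x^2 + 4*c4*x^3 - y^2*(c3 + 4*c4*x) = 0 := by
      rcases mul_eq_zero.mp (show y * (c1 + 2*c2*x + 3*c3*x^2 + 4*c4*x^3 - y^2*(c3 + 4*c4*x))
          = 0 by nlinarith [him]) with h | h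
      · exact absurd h hy
      · exact h
    have hsum : (c1*c2*c3 - c0*c3^2 - c1^2*c4)
        + x*(2*c3*(c2^2-4*c0*c4) + 2*c1*c3^2)
        + x^2*(4*c4*(c2^2-4*c0*c4) + 8*c2*c3^2 + 4*c1*c3*c4)
        + x^3*(8*c3^3 + 32*c2*c3*c4)
        + x^4*(48*c3^2*c4 + 32*c2*c4^2)
        + x^5*(96*c3*c4^2) + x^6*(64*c4^3) = 0 := by
      linear_combination (-(c3 + 4*c4*x)^2) * hre
        - (c4*(-6*x^2*(c3+4*c4*x) + (4*c4*x^3+3*c3*x^2+2*c2*x+c1) + y^2*(c3+4*c4*x))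
           - 3*c3*x*(c3+4*c4*x) - c2*(c3+4*c4*x)) * h'
    have e1 : 0 ≤ x*(2*c3*(c2^2-4*c0*c4) + 2*c1*c3^2) := by
      apply mul_nonneg hx
      have : 0 ≤ 2*c3*(c2^2-4*c0*c4) := by positivity
      nlinarith
    have e2 : 0 ≤ x^2*(4*c4*(c2^2-4*c0*c4) + 8*c2*c3^2 + 4*c1*c3*c4) := by
      apply mul_nonneg (sq_nonneg x)
      have : 0 ≤ 4*c4*(c2^2-4*c0*c4) := by positivity
      nlinarith
    have e3 : 0 ≤ x^3*(8*c3^3 + 32*c2*c3*c4) := mul_nonneg (pow_nonneg hx 3) (by positivity)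
    have e4 : 0 ≤ x^4*(48*c3^2*c4 + 32*c2*c4^2) := mul_nonneg (pow_nonneg hx 4) (by positivity)
    have e5 : 0 ≤ x^5*(96*c3*c4^2) := mul_nonneg (pow_nonneg hx 5) (by positivity)
    have e6 : 0 ≤ x^6*(64*c4^3) := mul_nonneg (pow_nonneg hx 6) (by positivity)
    linarith


lemma hurwitz3 (c0 c1 c2 c3 : ℝ) (h0 : 0 < c0) (h1 : 0 < c1) (h2 : 0 < c2) (h3 : 0 < c3)
    (H : ∀ z : ℂ, (c0:ℂ) + (c1:ℂ)*z + (c2:ℂ)*z^2 + (c3:ℂ)*z^3 = 0 → z.re < 0) :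
    c0*c3 < c1*c2 := by
  obtain ⟨r, hrneg, hr⟩ := cubic_real_root c3 c2 c1 c0 h3 h0
  have hrC : (c3:ℂ)*(r:ℂ)^3 + (c2:ℂ)*(r:ℂ)^2 + (c1:ℂ)*(r:ℂ) + (c0:ℂ) = 0 := by
    exact_mod_cast congrArg (fun x : ℝ => (x:ℂ)) hr
  have Hq : ∀ w : ℂ, (c3:ℂ)*w^2 + ((c2 + r*c3 : ℝ):ℂ)*w + ((c1 + r*c2 + r^2*c3 : ℝ):ℂ) = 0 →
      w.re < 0 := by
    intro w hw
    apply H w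
    push_cast at hw ⊢
    linear_combination (w - (r:ℂ)) * hw + hrC
  obtain ⟨hβ, -⟩ := quad_pos c3 (c2 + r*c3) (c1 + r*c2 + r^2*c3) h3 Hq
  nlinarith [mul_pos hβ (show 0 < c1 + c3*r^2 by positivity), hr]

lemma hurwitz4 (c0 c1 c2 c3 c4 : ℝ) (h0 : 0 < c0) (h1 : 0 < c1) (h2 : 0 < c2) (h3 : 0 < c3)
    (h4 : 0 < c4)
    (H : ∀ z : ℂ, (c0:ℂ) + (c1:ℂ)*z + (c2:ℂ)*z^2 + (c3:ℂ)*z^3 + (c4:ℂ)*z^4 = 0 → z.re < 0) :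
    c0*c3^2 + c1^2*c4 < c1*c2*c3 := by
  obtain ⟨z, hz⟩ : ∃ z : ℂ, (c0:ℂ) + (c1:ℂ)*z + (c2:ℂ)*z^2 + (c3:ℂ)*z^3 + (c4:ℂ)*z^4 = 0 := by
    set P : Polynomial ℂ := Polynomial.C (c0:ℂ) + Polynomial.C (c1:ℂ) * Polynomial.X +
      Polynomial.C (c2:ℂ) * Polynomial.X^2 + Polynomial.C (c3:ℂ) * Polynomial.X^3 +
      Polynomial.C (c4:ℂ) * Polynomial.X^4 with hP
    have hdeg : P.degree = 4 := by
      rw [hP]; compute_degree!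
      · exact_mod_cast Complex.ofReal_ne_zero.mpr h4.ne'
    obtain ⟨z, hzr⟩ := Complex.exists_root (by rw [hdeg]; norm_num : 0 < P.degree)
    refine ⟨z, ?_⟩
    have := hzr
    simp only [Polynomial.IsRoot, hP, Polynomial.eval_add, Polynomial.eval_mul,
      Polynomial.eval_pow, Polynomial.eval_C, Polynomial.eval_X] at this
    linear_combination this
  obtain ⟨s, t, u, v, hs, ht, h3e, h2e, h1e, h0e⟩ :
      ∃ s t u v : ℝ, 0 < s ∧ 0 < t ∧ c3 = u + s*c4 ∧ c2 = v + s*u + t*c4 ∧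
        c1 = s*v + t*u ∧ c0 = t*v := by
    rcases eq_or_ne z.im 0 with hy | hy
    · -- real root
      have hzx : z = ((z.re : ℝ) : ℂ) := Complex.ext rfl (by simp [hy])
      set x := z.re with hxdef
      have hxneg : x < 0 := H z hz
      have hr : c0 + c1*x + c2*x^2 + c3*x^3 + c4*x^4 = 0 := by
        have := hz
        rw [hzx] at this
        exact_mod_cast this
      have hb0 : 0 < c1 + x*(c2 + x*(c3 + x*c4)) := by
        by_contra hb
        push_neg at hb
        nlinarith [hr, mul_nonneg (neg_nonneg.2 hxneg.le) (neg_nonneg.2 hb)]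
      have Hcubic : ∀ w : ℂ, (c4:ℂ)*w^3 + ((c3 + x*c4 : ℝ):ℂ)*w^2 + ((c2 + x*(c3 + x*c4) : ℝ):ℂ)*w
          + ((c1 + x*(c2 + x*(c3 + x*c4)) : ℝ):ℂ) = 0 → w.re < 0 := by
        intro w hw
        apply H w
        have hrC : (c0:ℂ) + (c1:ℂ)*(x:ℂ) + (c2:ℂ)*(x:ℂ)^2 + (c3:ℂ)*(x:ℂ)^3 + (c4:ℂ)*(x:ℂ)^4 = 0 := by
          exact_mod_cast congrArg (fun q : ℝ => (q:ℂ)) hr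
        push_cast at hw ⊢
        linear_combination (w - (x:ℂ)) * hw + hrC
      obtain ⟨r2, hr2neg, hr2⟩ := cubic_real_root c4 (c3 + x*c4) (c2 + x*(c3 + x*c4))
        (c1 + x*(c2 + x*(c3 + x*c4))) h4 hb0
      have _hstab := Hcubic  -- cubic stability not needed beyond root sign (r2 < 0 given)
      refine ⟨-(x + r2), x*r2, (c3 + x*c4) + r2*c4,
        (c2 + x*(c3 + x*c4)) + r2*((c3 + x*c4) + r2*c4), by linarith,
        mul_pos_of_neg_of_neg hxneg hr2neg, by ring, by ring, ?_, ?_⟩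
      · linear_combination hr2
      · linear_combination hr - x*hr2
    · -- nonreal root
      set x := z.re with hxdef
      set y := z.im with hydef
      have hxneg : x < 0 := H z hz
      have h1c := Complex.add_conj z
      have h2c := Complex.mul_conj z
      have hq : z^2 + ((-(2*x) : ℝ):ℂ)*z + ((x^2 + y^2 : ℝ):ℂ) = 0 := by
        push_cast [Complex.normSq_apply] at h1c h2c ⊢
        linear_combination z*h1c - h2c
      have hAB : ((c1 - (-(2*x))*(c2 - (-(2*x))*(c3 - (-(2*x))*c4) - (x^2+y^2)*c4)
            - (x^2+y^2)*(c3 - (-(2*x))*c4) : ℝ):ℂ)*z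
          + ((c0 - (x^2+y^2)*(c2 - (-(2*x))*(c3 - (-(2*x))*c4) - (x^2+y^2)*c4) : ℝ):ℂ) = 0 := by
        push_cast
        push_cast at hq
        linear_combination hz - ((c4:ℂ)*z^2 + ((c3:ℂ) - (-(2*(x:ℂ)))*(c4:ℂ))*z +
          ((c2:ℂ) - (-(2*(x:ℂ)))*((c3:ℂ) - (-(2*(x:ℂ)))*(c4:ℂ)) - ((x:ℂ)^2+(y:ℂ)^2)*(c4:ℂ))) * hq
      have him := congrArg Complex.im hAB
      simp only [Complex.add_im, Complex.im_ofReal_mul, Complex.ofReal_im, Complex.zero_im,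
        add_zero] at him
      have hA : c1 - (-(2*x))*(c2 - (-(2*x))*(c3 - (-(2*x))*c4) - (x^2+y^2)*c4)
          - (x^2+y^2)*(c3 - (-(2*x))*c4) = 0 := by
        rcases mul_eq_zero.mp him with h | h
        · exact h
        · exact absurd h hy
      have hre := congrArg Complex.re hAB
      simp only [Complex.add_re, Complex.re_ofReal_mul, Complex.ofReal_re, Complex.zero_re] at hre
      rw [hA] at hre
      simp only [zero_mul, zero_add] at hre
      refine ⟨-(2*x), x^2+y^2, c3 - (-(2*x))*c4,
        c2 - (-(2*x))*(c3 - (-(2*x))*c4) - (x^2+y^2)*c4, by linarith, ?_, by ring, by ring,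
        by linear_combination hA, by linear_combination hre⟩
      have hy2 : 0 < y^2 := by positivity
      positivity
  have h3C : (c3:ℂ) = (u:ℂ) + (s:ℂ)*(c4:ℂ) := by exact_mod_cast h3e
  have h2C : (c2:ℂ) = (v:ℂ) + (s:ℂ)*(u:ℂ) + (t:ℂ)*(c4:ℂ) := by exact_mod_cast h2e
  have h1C : (c1:ℂ) = (s:ℂ)*(v:ℂ) + (t:ℂ)*(u:ℂ) := by exact_mod_cast h1e
  have h0C : (c0:ℂ) = (t:ℂ)*(v:ℂ) := by exact_mod_cast h0e
  have Hq2 : ∀ w : ℂ, (c4:ℂ)*w^2 + (u:ℂ)*w + (v:ℂ) = 0 → w.re < 0 := by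
    intro w hw
    apply H w
    linear_combination (w^2 + (s:ℂ)*w + (t:ℂ))*hw + w^3*h3C + w^2*h2C + w*h1C + h0C
  obtain ⟨hu, hv⟩ := quad_pos c4 u v h4 Hq2
  subst h3e h2e h1e h0e
  have key : (s*v + t*u)*(v + s*u + t*c4)*(u + s*c4) - ((t*v)*(u + s*c4)^2 + (s*v + t*u)^2*c4)
      = s*u*((v - t*c4)^2 + (u + s*c4)*(t*u + s*v)) := by ring
  have k1 : 0 < t*u + s*v := by positivity
  have k2 : 0 < u + s*c4 := by positivity
  have k4 : 0 < s*u*((v - t*c4)^2 + (u + s*c4)*(t*u + s*v)) := by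
    apply mul_pos (by positivity)
    have := sq_nonneg (v - t*c4)
    nlinarith [mul_pos k2 k1]
  linarith


/-- A real polynomial is Hurwitz stable if all its complex zeros have negative real parts. -/
def HurwitzStable (f : Polynomial ℝ) : Prop :=
  ∀ z : ℂ, Polynomial.aeval z f = 0 → z.re < 0

theorem gen_hadamard_stable_small_degree (n m : ℕ) (hm1 : 1 ≤ m) (hm4 : m ≤ 4) (hmn : m ≤ n)
    (a b : ℕ → ℝ) (ha : ∀ i ≤ n, 0 < a i)
    (hW : ∀ i, 2 ≤ i → i ≤ n - 1 → a (i - 2) * a (i + 1) < a i * a (i - 1))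
    (hb : ∀ i ≤ m, 0 < b i)
    (hg : HurwitzStable (∑ i ∈ Finset.range (m + 1), Polynomial.C (b i) * Polynomial.X ^ i)) :
    ∀ j ≤ n - m,
      HurwitzStable
        (∑ i ∈ Finset.range (m + 1), Polynomial.C (a (j + i) * b i) * Polynomial.X ^ i) := by
  intro j hj
  interval_cases m
  · -- m = 1
    intro z hz
    simp only [Finset.sum_range_succ, Finset.sum_range_zero, map_add, map_mul, map_pow,
      Polynomial.aeval_C, Polynomial.aeval_X, zero_add, pow_zero, mul_one, pow_one,
      Complex.coe_algebraMap] at hz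
    push_cast at hz
    exact stable1 (a (j+0) * b 0) (a (j+1) * b 1)
      (mul_pos (ha _ (by omega)) (hb _ (by omega)))
      (mul_pos (ha _ (by omega)) (hb _ (by omega))) z (by push_cast; linear_combination hz)
  · -- m = 2
    intro z hz
    simp only [Finset.sum_range_succ, Finset.sum_range_zero, map_add, map_mul, map_pow,
      Polynomial.aeval_C, Polynomial.aeval_X, zero_add, pow_zero, mul_one, pow_one,
      Complex.coe_algebraMap] at hz
    push_cast at hz
    exact stable2 (a (j+0) * b 0) (a (j+1) * b 1) (a (j+2) * b 2)
      (mul_pos (ha _ (by omega)) (hb _ (by omega)))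
      (mul_pos (ha _ (by omega)) (hb _ (by omega)))
      (mul_pos (ha _ (by omega)) (hb _ (by omega))) z (by push_cast; linear_combination hz)
  · -- m = 3
    have hg' : ∀ z : ℂ, (b 0:ℂ) + (b 1:ℂ)*z + (b 2:ℂ)*z^2 + (b 3:ℂ)*z^3 = 0 → z.re < 0 := by
      intro z hz0
      apply hg z
      simp only [Finset.sum_range_succ, Finset.sum_range_zero, map_add, map_mul, map_pow,
        Polynomial.aeval_C, Polynomial.aeval_X, zero_add, pow_zero, mul_one, pow_one,
        Complex.coe_algebraMap]
      linear_combination hz0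
    have hbD : b 0 * b 3 < b 1 * b 2 := hurwitz3 (b 0) (b 1) (b 2) (b 3)
      (hb 0 (by omega)) (hb 1 (by omega)) (hb 2 (by omega)) (hb 3 (by omega)) hg'
    have haD : a j * a (j+3) < a (j+2) * a (j+1) := hW (j+2) (by omega) (by omega)
    have hDall : (a j * b 0) * (a (j+3) * b 3) < (a (j+1) * b 1) * (a (j+2) * b 2) := by
      have := mul_lt_mul'' haD hbD
        (mul_nonneg (ha j (by omega)).le (ha (j+3) (by omega)).le)
        (mul_nonneg (hb 0 (by omega)).le (hb 3 (by omega)).le)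
      nlinarith [this]
    intro z hz
    simp only [Finset.sum_range_succ, Finset.sum_range_zero, map_add, map_mul, map_pow,
      Polynomial.aeval_C, Polynomial.aeval_X, zero_add, pow_zero, mul_one, pow_one,
      Complex.coe_algebraMap] at hz
    push_cast at hz
    exact stable3 (a (j+0) * b 0) (a (j+1) * b 1) (a (j+2) * b 2) (a (j+3) * b 3)
      (mul_pos (ha _ (by omega)) (hb _ (by omega)))
      (mul_pos (ha _ (by omega)) (hb _ (by omega)))
      (mul_pos (ha _ (by omega)) (hb _ (by omega)))
      (mul_pos (ha _ (by omega)) (hb _ (by omega)))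
      (by show a (j+0) * b 0 * (a (j+3) * b 3) < a (j+1) * b 1 * (a (j+2) * b 2)
          simpa using hDall) z (by push_cast; linear_combination hz)
  · -- m = 4
    have hg' : ∀ z : ℂ, (b 0:ℂ) + (b 1:ℂ)*z + (b 2:ℂ)*z^2 + (b 3:ℂ)*z^3 + (b 4:ℂ)*z^4 = 0 →
        z.re < 0 := by
      intro z hz0
      apply hg z
      simp only [Finset.sum_range_succ, Finset.sum_range_zero, map_add, map_mul, map_pow,
        Polynomial.aeval_C, Polynomial.aeval_X, zero_add, pow_zero, mul_one, pow_one,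
        Complex.coe_algebraMap]
      linear_combination hz0
    have hbD : b 0 * b 3^2 + b 1^2 * b 4 < b 1 * b 2 * b 3 := hurwitz4 (b 0) (b 1) (b 2) (b 3)
      (b 4) (hb 0 (by omega)) (hb 1 (by omega)) (hb 2 (by omega)) (hb 3 (by omega))
      (hb 4 (by omega)) hg'
    have haD1 : a j * a (j+3) < a (j+2) * a (j+1) := hW (j+2) (by omega) (by omega)
    have haD2 : a (j+1) * a (j+4) < a (j+3) * a (j+2) := hW (j+3) (by omega) (by omega)
    have hA : 0 < a (j+1) * a (j+2) * a (j+3) :=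
      mul_pos (mul_pos (ha _ (by omega)) (ha _ (by omega))) (ha _ (by omega))
    have k1 : a j * a (j+3) * a (j+3) < a (j+2) * a (j+1) * a (j+3) :=
      mul_lt_mul_of_pos_right haD1 (ha _ (by omega))
    have k2 : a (j+1) * a (j+4) * a (j+1) < a (j+3) * a (j+2) * a (j+1) :=
      mul_lt_mul_of_pos_right haD2 (ha _ (by omega))
    have k3 := mul_lt_mul_of_pos_left hbD hA
    have e1 := mul_lt_mul_of_pos_right k1
      (mul_pos (hb 0 (by omega)) (mul_pos (hb 3 (by omega)) (hb 3 (by omega))))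
    have e2 := mul_lt_mul_of_pos_right k2
      (mul_pos (mul_pos (hb 1 (by omega)) (hb 1 (by omega))) (hb 4 (by omega)))
    have hDall : (a (j+0) * b 0) * (a (j+3) * b 3)^2 + (a (j+1) * b 1)^2 * (a (j+4) * b 4)
        < (a (j+1) * b 1) * (a (j+2) * b 2) * (a (j+3) * b 3) := by
      simp only [Nat.add_zero]
      nlinarith [e1, e2, k3]
    intro z hz
    simp only [Finset.sum_range_succ, Finset.sum_range_zero, map_add, map_mul, map_pow,
      Polynomial.aeval_C, Polynomial.aeval_X, zero_add, pow_zero, mul_one, pow_one,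
      Complex.coe_algebraMap] at hz
    push_cast at hz
    exact stable4 (a (j+0) * b 0) (a (j+1) * b 1) (a (j+2) * b 2) (a (j+3) * b 3)
      (a (j+4) * b 4)
      (mul_pos (ha _ (by omega)) (hb _ (by omega)))
      (mul_pos (ha _ (by omega)) (hb _ (by omega)))
      (mul_pos (ha _ (by omega)) (hb _ (by omega)))
      (mul_pos (ha _ (by omega)) (hb _ (by omega)))
      (mul_pos (ha _ (by omega)) (hb _ (by omega)))
      hDall z (by push_cast; linear_combination hz)
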